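/- Let v_1, ..., v_r ∈ C^n be vectors whose truncations to the first r monomial evaluations [v_i]_{B_0} are linearly independent, where B_0 is the set of the first r monomials in graded lexicographic order. Then the symmetric tensors v_1^{⊗m}, ..., v_r^{⊗m} are linearly independent in S^m(C^n), provided m ≥ deg of the largest monomial in B_0 and the v_i are pairwise non-proportional with first coordinate 1. -/

import Mathlib

open Finset

lemma prod_flatMap_replicate {α : Type*} {M : Type*} [CommMonoid M]
    (l : List α) (c : α → ℕ) (g : α → M) :
    (l.flatMap fun a => List.replicate (c a) (g a)).prod
      = (l.map fun a => g a ^ c a).prod := by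
  induction l with
  | nil => simp
  | cons a l ih => simp [List.flatMap_cons, List.prod_append, List.prod_replicate, ih]

/-- The list of indices realizing the monomial `β`, padded with `0`s to length `m`. -/
def monList {q : ℕ} (m : ℕ) (β : Fin q → ℕ) : List (Fin (q + 1)) :=
  ((List.finRange q).flatMap fun j => List.replicate (β j) j.succ) ++
    List.replicate (m - ∑ j, β j) 0

lemma monList_length {q m : ℕ} (β : Fin q → ℕ) (h : (∑ j, β j) ≤ m) :
    (monList m β).length = m := by
  have h1 : ((List.finRange q).flatMap fun j => List.replicate (β j) j.succ).length
      = ∑ j, β j := by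
    rw [List.length_flatMap]
    have : ((List.finRange q).map (List.length ∘ fun j => List.replicate (β j) j.succ))
        = (List.finRange q).map β := by
      simp [Function.comp_def]
    rw [show (List.map (fun a => (List.replicate (β a) a.succ).length) (List.finRange q)) = (List.finRange q).map β from this, ← List.ofFn_eq_map, List.sum_ofFn]
  simp only [monList, List.length_append, h1, List.length_replicate]
  omega

lemma monList_prod {q m : ℕ} (β : Fin q → ℕ) (f : Fin (q + 1) → ℂ) (hf : f 0 = 1) :
    ((monList m β).map f).prod = ∏ j, f j.succ ^ β j := by
  simp only [monList, List.map_append, List.prod_append, List.map_flatMap,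
    List.map_replicate, List.prod_replicate, hf, one_pow, mul_one]
  have := prod_flatMap_replicate (List.finRange q) β (fun j => f j.succ)
  simp only [List.flatMap] at this ⊢
  rw [this, ← List.ofFn_eq_map, List.prod_ofFn]

theorem stmt15 {q r m : ℕ} (v : Fin r → Fin (q + 1) → ℂ)
    (hv0 : ∀ i, v i 0 = 1)
    (hprop : ∀ i i', i ≠ i' → ∀ c : ℂ, v i ≠ c • v i')
    (B : Fin r → Fin q → ℕ)
    (hBinj : Function.Injective B)
    (hBdeg : ∀ t, (∑ j, B t j) ≤ m)
    -- `B` enumerates an initial segment of the graded lexicographic order: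
    -- any monomial strictly earlier than some `B t` is also in the range of `B`.
    (hBinit : ∀ (t : Fin r) (β : Fin q → ℕ),
      ((∑ j, β j) < (∑ j, B t j) ∨
        ((∑ j, β j) = (∑ j, B t j) ∧
          ∃ i : Fin q, (∀ j, j < i → β j = B t j) ∧ B t i < β i)) →
      ∃ t', B t' = β)
    (hli : LinearIndependent ℂ fun i : Fin r =>
      fun t : Fin r => ∏ j : Fin q, (v i j.succ) ^ (B t j)) :
    LinearIndependent ℂ fun i : Fin r =>
      fun idx : Fin m → Fin (q + 1) => ∏ t, v i (idx t) := by
  rw [Fintype.linearIndependent_iff] at hli ⊢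
  intro g hg
  apply hli g
  funext t
  -- the index function realizing the monomial `B t`
  set L := monList m (B t) with hL
  have hlen : L.length = m := monList_length (B t) (hBdeg t)
  set idx : Fin m → Fin (q + 1) := fun s => L.get (Fin.cast hlen.symm s) with hidx
  have key : ∀ i, (∏ s, v i (idx s)) = ∏ j, (v i j.succ) ^ (B t j) := by
    intro i
    have h1 : (∏ s, v i (idx s)) = (List.ofFn fun s => v i (idx s)).prod := by
      rw [List.prod_ofFn]
    have h2 : (List.ofFn fun s => v i (idx s)) = L.map (v i) := by
      rw [hidx]
      have : (List.ofFn fun s : Fin m => v i (L.get (Fin.cast hlen.symm s)))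
          = List.ofFn fun s : Fin L.length => v i (L.get s) := by
        apply List.ext_get
        · simp [hlen]
        · intro n h₁ h₂
          simp [List.get_ofFn]
      rw [this]
      have : (List.ofFn fun s : Fin L.length => v i (L.get s))
          = (List.ofFn fun s : Fin L.length => L.get s).map (v i) := by
        rw [List.map_ofFn]; rfl
      rw [this, List.ofFn_get]
    rw [h1, h2, monList_prod _ _ (hv0 i)]
  have := congrFun hg idx
  simp only [Finset.sum_apply, Pi.smul_apply, smul_eq_mul, Pi.zero_apply] at this ⊢
  rw [← this]
  apply Finset.sum_congr rfl
  intro i _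
  rw [key i]
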